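/- arXiv:1201.5283 — 3 statements merged into one kernel-verified Lean document; each statement's English description precedes it below -/
import Mathlib

section
/- (Projection onto box-plus-linear-constraint domain.) Let Q = {α ∈ R^n : 0 ≤ αᵢ ≤ s for all i, ⟨α, v⟩ ≤ ρ}, and let α̂ ∈ R^n. If Σᵢ clamp(α̂ᵢ, 0, s)·vᵢ ≤ ρ, then the Euclidean projection of α̂ onto Q is given by α*ᵢ = clamp(α̂ᵢ, 0, s). Otherwise there exists η > 0 solving Σᵢ clamp(α̂ᵢ - η·vᵢ, 0, s)·vᵢ = ρ, and the projection is α*ᵢ = clamp(α̂ᵢ - η·vᵢ, 0, s). -/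
open scoped RealInnerProductSpace

lemma clamp_opt (s a b : ℝ) (hb0 : 0 ≤ b) (hbs : b ≤ s) :
    (a - min (max a 0) s) * (b - min (max a 0) s) ≤ 0 := by
  rcases le_total a 0 with h | h
  · rw [max_eq_right h, min_eq_left (hb0.trans hbs)]
    exact mul_nonpos_of_nonpos_of_nonneg (by linarith) (by linarith)
  · rcases le_total a s with h2 | h2
    · rw [max_eq_left h, min_eq_left h2]; simp
    · rw [max_eq_left h, min_eq_right h2]
      exact mul_nonpos_of_nonneg_of_nonpos (by linarith) (by linarith)

lemma proj_opt {E : Type*} [NormedAddCommGroup E] [InnerProductSpace ℝ E]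
    (a p b : E) (h : ⟪a - p, b - p⟫ ≤ 0) : ‖p - a‖ ≤ ‖b - a‖ := by
  have key : ‖b - a‖ ^ 2 = ‖b - p‖ ^ 2 + 2 * ⟪b - p, p - a⟫ + ‖p - a‖ ^ 2 := by
    have := norm_add_sq_real (b - p) (p - a)
    have hba : b - p + (p - a) = b - a := by abel
    rw [hba] at this
    linarith
  have hip : ⟪b - p, p - a⟫ = -⟪a - p, b - p⟫ := by
    rw [real_inner_comm]
    have : (p - a : E) = -(a - p) := by abel
    rw [this, inner_neg_left]
  nlinarith [norm_nonneg (b - a), norm_nonneg (p - a), norm_nonneg (b - p), sq_nonneg ‖b - p‖]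

/-- Projection onto the domain `Q = {α : 0 ≤ αᵢ ≤ s, ⟨α, v⟩ ≤ ρ}`.  If
`Σᵢ clamp(α̂ᵢ,0,s) vᵢ ≤ ρ` then the projection of `α̂` onto `Q` is
`α*ᵢ = clamp(α̂ᵢ,0,s)`; otherwise there exists `η > 0` solving
`Σᵢ clamp(α̂ᵢ - η vᵢ, 0, s) vᵢ = ρ` and the projection is
`α*ᵢ = clamp(α̂ᵢ - η vᵢ, 0, s)`. -/
theorem projection_box_linear_constraint (n : ℕ) (s ρ : ℝ) (hs : 0 < s)
    (v αhat : EuclideanSpace ℝ (Fin n))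
    (Q : Set (EuclideanSpace ℝ (Fin n)))
    (hQ : Q = {α | (∀ i, α i ∈ Set.Icc (0 : ℝ) s) ∧ ⟪α, v⟫ ≤ ρ})
    (hne : Q.Nonempty) :
    ((∑ i, min (max (αhat i) 0) s * v i ≤ ρ) →
      ((EuclideanSpace.equiv (Fin n) ℝ).symm (fun i => min (max (αhat i) 0) s) ∈ Q ∧
        ∀ β ∈ Q,
          ‖(EuclideanSpace.equiv (Fin n) ℝ).symm (fun i => min (max (αhat i) 0) s) - αhat‖
            ≤ ‖β - αhat‖)) ∧
    (¬ (∑ i, min (max (αhat i) 0) s * v i ≤ ρ) →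
      ∃ η > (0 : ℝ), (∑ i, min (max (αhat i - η * v i) 0) s * v i = ρ) ∧
        ((EuclideanSpace.equiv (Fin n) ℝ).symm (fun i => min (max (αhat i - η * v i) 0) s) ∈ Q ∧
          ∀ β ∈ Q,
            ‖(EuclideanSpace.equiv (Fin n) ℝ).symm
                (fun i => min (max (αhat i - η * v i) 0) s) - αhat‖
              ≤ ‖β - αhat‖)) := by
  have inner_sum : ∀ x y : EuclideanSpace ℝ (Fin n), ⟪x, y⟫ = ∑ i, x i * y i := by
    intro x y; simp [PiLp.inner_apply, RCLike.inner_apply, conj_trivial]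
    exact Finset.sum_congr rfl (fun i _ => mul_comm _ _)
  subst hQ
  constructor
  · -- Case 1
    intro hle
    set p : EuclideanSpace ℝ (Fin n) :=
      (EuclideanSpace.equiv (Fin n) ℝ).symm (fun i => min (max (αhat i) 0) s) with hp
    have hpi : ∀ i, p i = min (max (αhat i) 0) s := fun i => rfl
    have hmem : p ∈ {α : EuclideanSpace ℝ (Fin n) |
        (∀ i, α i ∈ Set.Icc (0 : ℝ) s) ∧ ⟪α, v⟫ ≤ ρ} := by
      refine ⟨fun i => ⟨le_min (le_max_right _ _) hs.le, min_le_right _ _⟩, ?_⟩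
      rw [inner_sum]
      exact hle
    refine ⟨hmem, fun β hβ => ?_⟩
    apply proj_opt
    rw [inner_sum]
    apply Finset.sum_nonpos
    intro i _
    have h1 := (hβ.1 i).1
    have h2 := (hβ.1 i).2
    simpa [hpi, PiLp.sub_apply] using clamp_opt s (αhat i) (β i) h1 h2
  · -- Case 2
    intro hgt
    push_neg at hgt
    obtain ⟨α₀, hα₀⟩ := hne
    set f : ℝ → ℝ := fun η => ∑ i, min (max (αhat i - η * v i) 0) s * v i with hf
    have hcont : Continuous f := by
      apply continuous_finset_sum
      intro i _
      exact (((continuous_const.sub (continuous_id.mul continuous_const)).max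
        continuous_const).min continuous_const).mul continuous_const
    have hf0 : ρ < f 0 := by
      simpa [hf] using hgt
    -- choose M large enough
    set M : ℝ := 1 + ∑ i, (if v i = 0 then 0 else (|αhat i| + s) / |v i|) with hM
    have hterm_nonneg : ∀ i ∈ Finset.univ, (0:ℝ) ≤ if v i = 0 then 0 else (|αhat i| + s) / |v i| := by
      intro i _
      split
      · exact le_rfl
      · positivity
    have hM1 : (1:ℝ) ≤ M := by
      have := Finset.sum_nonneg hterm_nonneg
      simp only [hM]; linarith
    have hMi : ∀ i, v i ≠ 0 → (|αhat i| + s) / |v i| ≤ M := by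
      intro i hvi
      have h := Finset.single_le_sum hterm_nonneg (Finset.mem_univ i)
      rw [if_neg hvi] at h
      simp only [hM]; linarith
    have hfM : f M ≤ ρ := by
      have step : f M ≤ ⟪α₀, v⟫ := by
        rw [inner_sum]
        apply Finset.sum_le_sum
        intro i _
        rcases lt_trichotomy (v i) 0 with hv | hv | hv
        · -- v i < 0 : clamp = s, s * v i ≤ α₀ i * v i
          have hvne : v i ≠ 0 := ne_of_lt hv
          have habs : |v i| = -v i := abs_of_neg hv
          have hM' := hMi i hvne
          have : s ≤ αhat i - M * v i := by
            rw [div_le_iff₀ (abs_pos.mpr hvne)] at hM'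
            have ha : -αhat i ≤ |αhat i| := neg_le_abs _
            nlinarith [abs_nonneg (αhat i)]
          rw [max_eq_left (le_trans hs.le this), min_eq_right this]
          have := (hα₀.1 i).2
          nlinarith
        · simp [hv]
        · -- v i > 0 : clamp = 0
          have hvne : v i ≠ 0 := ne_of_gt hv
          have habs : |v i| = v i := abs_of_pos hv
          have hM' := hMi i hvne
          have : αhat i - M * v i ≤ 0 := by
            rw [div_le_iff₀ (abs_pos.mpr hvne)] at hM'
            have ha : αhat i ≤ |αhat i| := le_abs_self _
            nlinarith
          rw [max_eq_right this, min_eq_left hs.le]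
          have := (hα₀.1 i).1
          nlinarith
      exact step.trans hα₀.2
    -- IVT
    have hmem : ρ ∈ Set.Icc (f M) (f 0) := ⟨hfM, hf0.le⟩
    have hsub := intermediate_value_Icc' (le_trans zero_le_one hM1) hcont.continuousOn
    obtain ⟨η, hηmem, hηeq⟩ := hsub hmem
    have hηpos : 0 < η := by
      rcases eq_or_lt_of_le hηmem.1 with h | h
      · exfalso; rw [← h] at hηeq; linarith [hf0, hηeq]
      · exact h
    refine ⟨η, hηpos, hηeq, ?_, ?_⟩
    · refine ⟨fun i => ⟨le_min (le_max_right _ _) hs.le, min_le_right _ _⟩, ?_⟩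
      rw [inner_sum]
      exact le_of_eq hηeq
    · intro β hβ
      apply proj_opt
      set p : EuclideanSpace ℝ (Fin n) :=
        (EuclideanSpace.equiv (Fin n) ℝ).symm (fun i => min (max (αhat i - η * v i) 0) s) with hp
      have hpi : ∀ i, p i = min (max (αhat i - η * v i) 0) s := fun i => rfl
      rw [inner_sum]
      have hsumv : ∑ i, p i * v i = ρ := hηeq
      have hβv : ∑ i, β i * v i ≤ ρ := by rw [← inner_sum]; exact hβ.2
      have hterm : ∀ i ∈ Finset.univ, ((αhat - p) i) * ((β - p) i)
          ≤ η * (v i * ((β - p) i)) := by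
        intro i _
        have h := clamp_opt s (αhat i - η * v i) (β i) (hβ.1 i).1 (hβ.1 i).2
        rw [← hpi i] at h
        simp only [PiLp.sub_apply]
        nlinarith [h]
      calc ∑ i, ((αhat - p) i) * ((β - p) i)
          ≤ ∑ i, η * (v i * ((β - p) i)) := Finset.sum_le_sum hterm
        _ = η * ((∑ i, β i * v i) - ∑ i, p i * v i) := by
            rw [← Finset.mul_sum]
            congr 1
            rw [← Finset.sum_sub_distrib]
            apply Finset.sum_congr rfl
            intro i _
            simp only [PiLp.sub_apply]
            ring
        _ ≤ 0 := mul_nonpos_of_nonneg_of_nonpos hηpos.le (by rw [hsumv]; linarith)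
end

section
/- (Key prox-step inequality, Euclidean case of Lemma 3.1 of Nemirovski.) Let U ⊆ R^m be a nonempty closed convex set, z₀ ∈ R^m, γ > 0, and ξ, η ∈ R^m. Define z_h = argmin_{z ∈ U} ½‖z - (z₀ - γξ)‖₂² and z₁ = argmin_{z ∈ U} ½‖z - (z₀ - γη)‖₂². Then for every z ∈ U: γ·⟨η, z_h - z⟩ ≤ ½‖z - z₀‖₂² - ½‖z - z₁‖₂² + γ²·‖ξ - η‖₂² - ½(‖z_h - z₀‖₂² + ‖z_h - z₁‖₂²). -/
open scoped RealInnerProductSpace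

/-- Variational inequality from an argmin characterization. -/
lemma argmin_vi {E : Type*} [NormedAddCommGroup E] [InnerProductSpace ℝ E]
    {U : Set E} (hU : Convex ℝ U) {p a : E} (hp : p ∈ U)
    (hmin : ∀ z ∈ U, (1 / 2) * ‖p - a‖ ^ 2 ≤ (1 / 2) * ‖z - a‖ ^ 2) :
    ∀ z ∈ U, ⟪a - p, z - p⟫ ≤ 0 := by
  haveI : Nonempty U := ⟨⟨p, hp⟩⟩
  have key : ‖a - p‖ = ⨅ w : U, ‖a - w‖ := by
    refine le_antisymm (le_ciInf fun w => ?_)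
      (ciInf_le (f := fun w : U => ‖a - (w : E)‖) ⟨(0 : ℝ), fun _ ⟨_, h⟩ => h ▸ norm_nonneg _⟩ ⟨p, hp⟩)
    have h := hmin w w.2
    have h2 : ‖p - a‖ ^ 2 ≤ ‖(w : E) - a‖ ^ 2 := by linarith
    have := (pow_le_pow_iff_left₀ (norm_nonneg _) (norm_nonneg _) (by norm_num)).mp h2
    rwa [norm_sub_rev p a, norm_sub_rev (w : E) a] at this
  exact (norm_eq_iInf_iff_real_inner_le_zero hU hp).mp key

/-- Three-point identity. -/
lemma three_point {E : Type*} [NormedAddCommGroup E] [InnerProductSpace ℝ E]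
    (p q r : E) : ⟪p - q, r - q⟫ = (‖p - q‖ ^ 2 + ‖r - q‖ ^ 2 - ‖p - r‖ ^ 2) / 2 := by
  have h : p - r = (p - q) - (r - q) := by abel
  have hns := norm_sub_sq_real (p - q) (r - q)
  rw [← h] at hns
  have e4 : ⟪p - q, p - q⟫ = ‖p - q‖ ^ 2 := real_inner_self_eq_norm_sq _
  linarith

/-- Key prox-step inequality (Euclidean case of Lemma 3.1 of Nemirovski). -/
theorem prox_key_inequality (m : ℕ) (U : Set (EuclideanSpace ℝ (Fin m)))
    (hUconv : Convex ℝ U) (hUclosed : IsClosed U) (hne : U.Nonempty)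
    (z₀ ξ η zh z₁ : EuclideanSpace ℝ (Fin m)) (γ : ℝ) (hγ : 0 < γ)
    (hzh : zh ∈ U ∧ ∀ z ∈ U,
      (1 / 2) * ‖zh - (z₀ - γ • ξ)‖ ^ 2 ≤ (1 / 2) * ‖z - (z₀ - γ • ξ)‖ ^ 2)
    (hz₁ : z₁ ∈ U ∧ ∀ z ∈ U,
      (1 / 2) * ‖z₁ - (z₀ - γ • η)‖ ^ 2 ≤ (1 / 2) * ‖z - (z₀ - γ • η)‖ ^ 2) :
    ∀ z ∈ U,
      γ * ⟪η, zh - z⟫ ≤ (1 / 2) * ‖z - z₀‖ ^ 2 - (1 / 2) * ‖z - z₁‖ ^ 2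
        + γ ^ 2 * ‖ξ - η‖ ^ 2 - (1 / 2) * (‖zh - z₀‖ ^ 2 + ‖zh - z₁‖ ^ 2) := by
  intro z hz
  obtain ⟨hzhU, hzhmin⟩ := hzh
  obtain ⟨hz₁U, hz₁min⟩ := hz₁
  have vi1 := argmin_vi hUconv hzhU hzhmin
  have vi2 := argmin_vi hUconv hz₁U hz₁min
  -- rewrite the variational inequalities
  have hA : ⟪z₀ - z₁, z - z₁⟫ - γ * ⟪η, z - z₁⟫ ≤ 0 := by
    have := vi2 z hz
    have e : z₀ - γ • η - z₁ = (z₀ - z₁) - γ • η := by abel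
    rw [e, inner_sub_left, real_inner_smul_left] at this
    linarith
  have hB : ⟪z₀ - zh, z₁ - zh⟫ - γ * ⟪ξ, z₁ - zh⟫ ≤ 0 := by
    have := vi1 z₁ hz₁U
    have e : z₀ - γ • ξ - zh = (z₀ - zh) - γ • ξ := by abel
    rw [e, inner_sub_left, real_inner_smul_left] at this
    linarith
  have hC : ⟪z₀ - z₁, zh - z₁⟫ - γ * ⟪η, zh - z₁⟫ ≤ 0 := by
    have := vi2 zh hzhU
    have e : z₀ - γ • η - z₁ = (z₀ - z₁) - γ • η := by abel
    rw [e, inner_sub_left, real_inner_smul_left] at this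
    linarith
  -- nonexpansiveness: ‖zh - z₁‖ ≤ γ * ‖ξ - η‖
  have hlip : ‖zh - z₁‖ ≤ γ * ‖ξ - η‖ := by
    have hBC : ‖zh - z₁‖ ^ 2 ≤ γ * ⟪η - ξ, zh - z₁⟫ := by
      have e1 : ⟪z₀ - zh, z₁ - zh⟫ = -⟪z₀ - z₁, zh - z₁⟫ + ⟪zh - z₁, zh - z₁⟫ := by
        have e : z₀ - zh = (z₀ - z₁) - (zh - z₁) := by abel
        have e' : z₁ - zh = -(zh - z₁) := by abel
        rw [e, e', inner_sub_left, inner_neg_right, inner_neg_right]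
        ring
      have e2 : ⟪η - ξ, zh - z₁⟫ = ⟪η, zh - z₁⟫ - ⟪ξ, zh - z₁⟫ := inner_sub_left η ξ _
      have e3 : ⟪ξ, z₁ - zh⟫ = -⟪ξ, zh - z₁⟫ := by
        have e' : z₁ - zh = -(zh - z₁) := by abel
        rw [e', inner_neg_right]
      have e4 : ⟪zh - z₁, zh - z₁⟫ = ‖zh - z₁‖ ^ 2 := real_inner_self_eq_norm_sq _
      rw [e1, e3] at hB
      rw [e2]
      linarith
    have hcs : ⟪η - ξ, zh - z₁⟫ ≤ ‖η - ξ‖ * ‖zh - z₁‖ := real_inner_le_norm _ _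
    have hne' : ‖η - ξ‖ = ‖ξ - η‖ := norm_sub_rev _ _
    rcases eq_or_lt_of_le (norm_nonneg (zh - z₁)) with h0 | h0
    · rw [← h0]; positivity
    · have : ‖zh - z₁‖ ^ 2 ≤ γ * (‖ξ - η‖ * ‖zh - z₁‖) := by
        calc ‖zh - z₁‖ ^ 2 ≤ γ * ⟪η - ξ, zh - z₁⟫ := hBC
        _ ≤ γ * (‖ξ - η‖ * ‖zh - z₁‖) := by
            rw [← hne']; exact mul_le_mul_of_nonneg_left hcs hγ.le
      nlinarith
  -- main chain
  have step1 : γ * ⟪η, z₁ - z⟫ ≤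
      (1 / 2) * ‖z - z₀‖ ^ 2 - (1 / 2) * ‖z - z₁‖ ^ 2 - (1 / 2) * ‖z₁ - z₀‖ ^ 2 := by
    have t := three_point z₀ z₁ z
    have e : ⟪η, z₁ - z⟫ = -⟪η, z - z₁⟫ := by
      have e' : z₁ - z = -(z - z₁) := by abel
      rw [e', inner_neg_right]
    have n1 : ‖z₀ - z₁‖ = ‖z₁ - z₀‖ := norm_sub_rev _ _
    have n2 : ‖z₀ - z‖ = ‖z - z₀‖ := norm_sub_rev _ _
    rw [t, n1, n2] at hA
    rw [e]
    linarith
  have step2 : γ * ⟪ξ, zh - z₁⟫ ≤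
      (1 / 2) * ‖z₁ - z₀‖ ^ 2 - (1 / 2) * ‖zh - z₀‖ ^ 2 - (1 / 2) * ‖zh - z₁‖ ^ 2 := by
    have t := three_point z₀ zh z₁
    have e : ⟪ξ, zh - z₁⟫ = -⟪ξ, z₁ - zh⟫ := by
      have e' : zh - z₁ = -(z₁ - zh) := by abel
      rw [e', inner_neg_right]
    have n1 : ‖z₀ - zh‖ = ‖zh - z₀‖ := norm_sub_rev _ _
    have n2 : ‖z₀ - z₁‖ = ‖z₁ - z₀‖ := norm_sub_rev _ _
    have n3 : ‖z₁ - zh‖ = ‖zh - z₁‖ := norm_sub_rev _ _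
    rw [t, n1, n2, n3] at hB
    rw [e]
    linarith
  have step3 : γ * ⟪η - ξ, zh - z₁⟫ ≤ γ ^ 2 * ‖ξ - η‖ ^ 2 := by
    have hcs : ⟪η - ξ, zh - z₁⟫ ≤ ‖η - ξ‖ * ‖zh - z₁‖ := real_inner_le_norm _ _
    have hne' : ‖η - ξ‖ = ‖ξ - η‖ := norm_sub_rev _ _
    calc γ * ⟪η - ξ, zh - z₁⟫ ≤ γ * (‖ξ - η‖ * ‖zh - z₁‖) := by
          rw [← hne']; exact mul_le_mul_of_nonneg_left hcs hγ.le
    _ ≤ γ * (‖ξ - η‖ * (γ * ‖ξ - η‖)) :=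
        mul_le_mul_of_nonneg_left
          (mul_le_mul_of_nonneg_left hlip (norm_nonneg _)) hγ.le
    _ = γ ^ 2 * ‖ξ - η‖ ^ 2 := by ring
  have split : ⟪η, zh - z⟫ = ⟪η - ξ, zh - z₁⟫ + ⟪ξ, zh - z₁⟫ + ⟪η, z₁ - z⟫ := by
    have e : zh - z = (zh - z₁) + (z₁ - z) := by abel
    rw [e, inner_add_right, inner_sub_left]
    ring
  rw [split]
  have := add_le_add (add_le_add step3 step2) step1
  linarith
end

section
/- The map η ↦ ‖w(η)‖ is non-increasing on [0, ∞), where w(η) is the unique minimizer of w ↦ ½‖w - ŵ‖₂² + η·‖w‖ over R^d, ‖·‖ is any norm on R^d, and ŵ ∈ R^d is fixed. -/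
/-- The map `η ↦ N(w(η))` is non-increasing on `[0,∞)`, where `w(η)` is the
(unique) minimizer of `w ↦ ½‖w - ŵ‖₂² + η N(w)` and `N` is any norm on `ℝ^d`. -/
theorem prox_norm_nonincreasing (d : ℕ)
    (N : EuclideanSpace ℝ (Fin d) → ℝ)
    (hN1 : ∀ (a : ℝ) (w : EuclideanSpace ℝ (Fin d)), N (a • w) = |a| * N w)
    (hN2 : ∀ u v : EuclideanSpace ℝ (Fin d), N (u + v) ≤ N u + N v)
    (hN3 : ∀ w : EuclideanSpace ℝ (Fin d), N w = 0 → w = 0)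
    (what : EuclideanSpace ℝ (Fin d))
    (η₁ η₂ : ℝ) (h₁ : 0 ≤ η₁) (h₁₂ : η₁ ≤ η₂)
    (w₁ w₂ : EuclideanSpace ℝ (Fin d))
    (hmin₁ : ∀ w, (1 / 2) * ‖w₁ - what‖ ^ 2 + η₁ * N w₁
        ≤ (1 / 2) * ‖w - what‖ ^ 2 + η₁ * N w)
    (hmin₂ : ∀ w, (1 / 2) * ‖w₂ - what‖ ^ 2 + η₂ * N w₂
        ≤ (1 / 2) * ‖w - what‖ ^ 2 + η₂ * N w) :
    N w₂ ≤ N w₁ := by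
  rcases lt_or_eq_of_le h₁₂ with hlt | heq
  · have A := hmin₁ w₂
    have B := hmin₂ w₁
    nlinarith [mul_pos (sub_pos.mpr hlt) (sub_pos.mpr hlt)]
  · subst heq
    -- strong convexity: midpoint argument forces w₁ = w₂
    set m : EuclideanSpace ℝ (Fin d) := (2:ℝ)⁻¹ • (w₁ + w₂) with hm
    have hNm : N m ≤ (N w₁ + N w₂) / 2 := by
      have := hN1 (2:ℝ)⁻¹ (w₁ + w₂)
      have h2 := hN2 w₁ w₂
      rw [hm, this, abs_of_pos (by norm_num : (0:ℝ) < (2:ℝ)⁻¹)]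
      linarith
    have hpar : ‖m - what‖ ^ 2
        = ((2 * (‖w₁ - what‖^2 + ‖w₂ - what‖^2)) - ‖w₁ - w₂‖^2) / 4 := by
      have key : ‖(w₁ - what) + (w₂ - what)‖ * ‖(w₁ - what) + (w₂ - what)‖
          + ‖(w₁ - what) - (w₂ - what)‖ * ‖(w₁ - what) - (w₂ - what)‖
          = 2 * (‖w₁ - what‖ * ‖w₁ - what‖ + ‖w₂ - what‖ * ‖w₂ - what‖) :=
        by simpa only [sq] using parallelogram_law_with_norm ℝ (w₁ - what) (w₂ - what)
      have hmw : m - what = (2:ℝ)⁻¹ • ((w₁ - what) + (w₂ - what)) := by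
        rw [hm]; module
      have hsub : (w₁ - what) - (w₂ - what) = w₁ - w₂ := by module
      rw [hmw, norm_smul]
      rw [hsub] at key
      simp only [norm_inv, Real.norm_ofNat]
      nlinarith [key]
    have Hm := hmin₁ m
    have H2 := hmin₁ w₂
    have H1 := hmin₂ w₁
    have hww : ‖w₁ - w₂‖ ^ 2 ≤ 0 := by
      nlinarith [mul_le_mul_of_nonneg_left hNm h₁]
    have : w₁ = w₂ := by
      have := sq_nonneg ‖w₁ - w₂‖
      have hz : ‖w₁ - w₂‖ = 0 := by nlinarith
      exact sub_eq_zero.mp (norm_eq_zero.mp hz)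
    rw [this]
end
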